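/- For every real p ≥ 1 there is a constant K, independent of N and of x, such that for all N ≥ 1 and all x ∈ X^N the MALA proposal y satisfies E_ξ[‖y − x‖_s^p] ≤ K (Δt)^{p/2} (1 + ‖x‖_s^p). -/

import Mathlib

open MeasureTheory ProbabilityTheory Real Filter
open scoped ENNReal NNReal Topology

noncomputable section

/-- The model space for every Sobolev-like space `H^r`: the Hilbert space `ℓ²(ℕ; ℝ)`.
An element `u : Hsp`, viewed as a point of `H^r`, represents the sequence
`(x_j)_{j ≥ 1}` with `x_{j+1} = (j+1)^{-r} * u j` (so that `‖u‖ = ‖x‖_r`,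
and the indices are shifted by one: `j : ℕ` stands for the coordinate `j+1 ≥ 1`). -/
abbrev Hsp : Type := lp (fun _ : ℕ => ℝ) 2

/-- the weight `(j+1)^r`. -/
def wt (r : ℝ) (j : ℕ) : ℝ := ((j : ℝ) + 1) ^ r

/-- the coordinates of `u : Hsp` viewed as an element of `H^r`. -/
def seqr (r : ℝ) (u : Hsp) (j : ℕ) : ℝ := wt (-r) j * u j

/-- the `H^r` norm of a raw sequence. -/
def rnorm (r : ℝ) (a : ℕ → ℝ) : ℝ := (∑' j, wt (2 * r) j * a j ^ 2) ^ ((1 : ℝ) / 2)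

theorem memℓp_of_eventually_zero (f : ℕ → ℝ) (N : ℕ) (hf : ∀ j, N ≤ j → f j = 0) :
    Memℓp f 2 := by
  apply memℓp_gen
  apply summable_of_ne_finset_zero (s := Finset.range N)
  intro j hj
  rw [Finset.mem_range, not_lt] at hj
  rw [hf j hj]
  simp [Real.zero_rpow]

/-- embedding of `X^N ≅ ℝ^N` into `Hsp`, viewing `x : Fin N → ℝ` as the element of `H^s`
whose `(i+1)`-th coordinate is `x i` for `i < N` and `0` beyond. -/
def ofX (s : ℝ) (N : ℕ) (x : Fin N → ℝ) : Hsp :=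
  ⟨fun j => if h : j < N then wt s j * x ⟨j, h⟩ else 0,
   memℓp_of_eventually_zero _ N (fun j hj => dif_neg (Nat.not_lt.mpr hj))⟩

/-- the projection `P^N` (truncation of all coordinates beyond the `N`-th). -/
def PNproj (N : ℕ) (u : Hsp) : Hsp :=
  ⟨fun j => if j < N then u j else 0, by
    apply memℓp_gen
    refine Summable.of_nonneg_of_le (fun j => ?_) (fun j => ?_)
      ((lp.memℓp u).summable (by norm_num))
    · positivity
    · by_cases h : j < N <;> simp [h] <;> positivity⟩

/-- the MALA time step `Δt = N^{-1/3}`. -/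
def Δt (N : ℕ) : ℝ := (N : ℝ) ^ (-(1/3) : ℝ)

/-- `‖u‖²_{C^N} = ∑_{j=1}^N λ_j^{-2} u_j²` on `X^N ≅ ℝ^N`. -/
def cnormsq (lam : ℕ → ℝ) (N : ℕ) (u : Fin N → ℝ) : ℝ :=
  ∑ i : Fin N, (lam i ^ 2)⁻¹ * u i ^ 2

/-- the `H^s` norm of a point of `X^N ≅ ℝ^N`. -/
def xnorm (s : ℝ) (N : ℕ) (u : Fin N → ℝ) : ℝ :=
  (∑ i : Fin N, wt (2 * s) i * u i ^ 2) ^ ((1 : ℝ) / 2)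

/-- `Ψ^N = Ψ ∘ P^N`, as a function on `X^N ≅ ℝ^N`. -/
def PsiN (s : ℝ) (Ψ : Hsp → ℝ) (N : ℕ) (x : Fin N → ℝ) : ℝ := Ψ (ofX s N x)

/-- `μ^N(x) = -(P^N x + C^N ∇Ψ^N(x))` on `X^N ≅ ℝ^N`. -/
def muN (lam : ℕ → ℝ) (s : ℝ) (gradΨ : Hsp → Hsp) (N : ℕ) (x : Fin N → ℝ) : Fin N → ℝ :=
  fun i => -(x i + lam i ^ 2 * seqr (-s) (gradΨ (ofX s N x)) i)

/-- the MALA proposal `y = x + δ μ^N(x) + √(2δ) (C^N)^{1/2} ξ^N`, with `δ = ℓ Δt`. -/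
def propY (lam : ℕ → ℝ) (s : ℝ) (gradΨ : Hsp → Hsp) (ℓ : ℝ) (N : ℕ)
    (x ξ : Fin N → ℝ) : Fin N → ℝ :=
  fun i => x i + (ℓ * Δt N) * muN lam s gradΨ N x i +
    Real.sqrt (2 * (ℓ * Δt N)) * (lam i * ξ i)

/-- the MALA log acceptance ratio `Q^N(x, ξ^N)`. -/
def QN (lam : ℕ → ℝ) (s : ℝ) (Ψ : Hsp → ℝ) (gradΨ : Hsp → Hsp) (ℓ : ℝ) (N : ℕ)
    (x ξ : Fin N → ℝ) : ℝ :=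
  -(1/2) * (cnormsq lam N (propY lam s gradΨ ℓ N x ξ) - cnormsq lam N x)
  - (PsiN s Ψ N (propY lam s gradΨ ℓ N x ξ) - PsiN s Ψ N x)
  - (1 / (4 * (ℓ * Δt N))) *
      (cnormsq lam N (fun i => x i - propY lam s gradΨ ℓ N x ξ i
          - (ℓ * Δt N) * muN lam s gradΨ N (propY lam s gradΨ ℓ N x ξ) i)
       - cnormsq lam N (fun i => propY lam s gradΨ ℓ N x ξ i - x i
          - (ℓ * Δt N) * muN lam s gradΨ N x i))

/-- the law of `ξ^N`: `N` i.i.d. standard Gaussians. -/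
def gaussN (N : ℕ) : Measure (Fin N → ℝ) := Measure.pi fun _ => gaussianReal 0 1

/-- the target `π^N`: the probability measure on `X^N ≅ ℝ^N` whose density with respect to
Lebesgue measure is proportional to `exp(-½‖x‖²_{C^N} - Ψ^N(x))`. -/
def piN (lam : ℕ → ℝ) (s : ℝ) (Ψ : Hsp → ℝ) (N : ℕ) : Measure (Fin N → ℝ) :=
  ((volume.withDensity fun x => ENNReal.ofReal
      (Real.exp (-(1/2) * cnormsq lam N x - PsiN s Ψ N x))) Set.univ)⁻¹ •
  (volume.withDensity fun x => ENNReal.ofReal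
      (Real.exp (-(1/2) * cnormsq lam N x - PsiN s Ψ N x)))

/-- `Z^N(x, ξ^N)`, the Gaussian part of `Q^N`. -/
def ZN (lam : ℕ → ℝ) (ℓ : ℝ) (N : ℕ) (x ξ : Fin N → ℝ) : ℝ :=
  -(ℓ ^ 3) / 4 - (ℓ ^ ((3 : ℝ) / 2) / Real.sqrt 2) * (N : ℝ) ^ (-(1/2) : ℝ) *
      ∑ i : Fin N, (lam i)⁻¹ * ξ i * x i

/-- `i^N(x, ξ^N) = ½ (ℓΔt)² (‖x‖²_{C^N} - ‖(C^N)^{1/2} ξ^N‖²_{C^N})`. -/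
def iN (lam : ℕ → ℝ) (ℓ : ℝ) (N : ℕ) (x ξ : Fin N → ℝ) : ℝ :=
  (1/2) * (ℓ * Δt N) ^ 2 *
    (cnormsq lam N x - cnormsq lam N fun i => lam i * ξ i)

/-- the law of `Z_ℓ ∼ N(-ℓ³/4, ℓ³/2)`. -/
def lawZl (ℓ : ℝ) : Measure ℝ := gaussianReal (-(ℓ ^ 3) / 4) (Real.toNNReal (ℓ ^ 3 / 2))

/-- the limiting mean acceptance probability `α(ℓ) = E[1 ∧ exp(Z_ℓ)]`. -/
def alphaEll (ℓ : ℝ) : ℝ := ∫ z, min 1 (Real.exp z) ∂(lawZl ℓ)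

/-- the speed function `h(ℓ) = ℓ α(ℓ)`. -/
def hEll (ℓ : ℝ) : ℝ := ℓ * alphaEll ℓ


/-! ### Auxiliary lemmas -/

lemma wt_pos (r : ℝ) (j : ℕ) : 0 < wt r j :=
  Real.rpow_pos_of_pos (by positivity) r

lemma wt_nonneg (r : ℝ) (j : ℕ) : 0 ≤ wt r j := (wt_pos r j).le

lemma wt_sq (r : ℝ) (j : ℕ) : wt r j ^ 2 = wt (2*r) j := by
  unfold wt
  rw [← Real.rpow_natCast (((j:ℝ)+1) ^ r) 2, ← Real.rpow_mul (by positivity)]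
  norm_num [mul_comm]

lemma wt_mul (a b : ℝ) (j : ℕ) : wt a j * wt b j = wt (a+b) j := by
  unfold wt; rw [← Real.rpow_add (by positivity)]

lemma wt_le_one {r : ℝ} (hr : r ≤ 0) (j : ℕ) : wt r j ≤ 1 :=
  Real.rpow_le_one_of_one_le_of_nonpos
    (by have := Nat.cast_nonneg (α := ℝ) j; linarith) hr

lemma xnorm_sum_nonneg (s : ℝ) (N : ℕ) (u : Fin N → ℝ) :
    0 ≤ ∑ i : Fin N, wt (2 * s) i * u i ^ 2 :=
  Finset.sum_nonneg fun i _ => mul_nonneg (wt_nonneg _ _) (sq_nonneg _)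

lemma xnorm_eq_sqrt (s : ℝ) (N : ℕ) (u : Fin N → ℝ) :
    xnorm s N u = Real.sqrt (∑ i : Fin N, wt (2 * s) i * u i ^ 2) := by
  rw [Real.sqrt_eq_rpow]; rfl

lemma xnorm_nonneg (s : ℝ) (N : ℕ) (u : Fin N → ℝ) : 0 ≤ xnorm s N u := by
  rw [xnorm_eq_sqrt]; exact Real.sqrt_nonneg _

lemma xnorm_eq_enorm (s : ℝ) (N : ℕ) (u : Fin N → ℝ) :
    xnorm s N u = ‖(WithLp.equiv 2 (Fin N → ℝ)).symm (fun i => wt s i * u i)‖ := by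
  rw [EuclideanSpace.norm_eq, xnorm_eq_sqrt]
  congr 1
  refine Finset.sum_congr rfl fun i _ => ?_
  simp only [Real.norm_eq_abs, sq_abs]
  show _ = (wt s i * u i) ^ 2
  rw [mul_pow, wt_sq]

lemma xnorm_triangle (s : ℝ) (N : ℕ) (u v : Fin N → ℝ) :
    xnorm s N (fun i => u i + v i) ≤ xnorm s N u + xnorm s N v := by
  rw [xnorm_eq_enorm, xnorm_eq_enorm s N u, xnorm_eq_enorm s N v]
  have : (WithLp.equiv 2 (Fin N → ℝ)).symm (fun i => wt s i * (u i + v i)) =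
      (WithLp.equiv 2 (Fin N → ℝ)).symm (fun i => wt s i * u i) +
      (WithLp.equiv 2 (Fin N → ℝ)).symm (fun i => wt s i * v i) := by
    ext i; simp [mul_add]
  rw [this]; exact norm_add_le _ _

lemma xnorm_smul (s : ℝ) (N : ℕ) (c : ℝ) (u : Fin N → ℝ) :
    xnorm s N (fun i => c * u i) = |c| * xnorm s N u := by
  rw [xnorm_eq_enorm, xnorm_eq_enorm s N u]
  have : (WithLp.equiv 2 (Fin N → ℝ)).symm (fun i => wt s i * (c * u i)) =
      c • (WithLp.equiv 2 (Fin N → ℝ)).symm (fun i => wt s i * u i) := by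
    ext i; simp; ring
  rw [this, norm_smul, Real.norm_eq_abs]

lemma xnorm_mono (s : ℝ) (N : ℕ) (u v : Fin N → ℝ) (h : ∀ i, |u i| ≤ |v i|) :
    xnorm s N u ≤ xnorm s N v := by
  rw [xnorm_eq_sqrt, xnorm_eq_sqrt]
  apply Real.sqrt_le_sqrt
  refine Finset.sum_le_sum fun i _ => ?_
  have h2 : u i ^ 2 ≤ v i ^ 2 := by
    rw [← sq_abs (u i), ← sq_abs (v i)]
    exact pow_le_pow_left₀ (abs_nonneg _) (h i) 2
  exact mul_le_mul_of_nonneg_left h2 (wt_nonneg _ _)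

lemma rpow_add_le_mul (u v p : ℝ) (hu : 0 ≤ u) (hv : 0 ≤ v) (hp : 0 ≤ p) :
    (u + v) ^ p ≤ 2 ^ p * (u ^ p + v ^ p) := by
  have h1 : u + v ≤ 2 * max u v := by
    rcases le_total u v with h | h
    · simp [max_eq_right h]; linarith
    · simp [max_eq_left h]; linarith
  calc (u + v) ^ p ≤ (2 * max u v) ^ p :=
        Real.rpow_le_rpow (by linarith) h1 hp
    _ = 2 ^ p * (max u v) ^ p := Real.mul_rpow (by norm_num) (le_max_of_le_left hu)
    _ ≤ 2 ^ p * (u ^ p + v ^ p) := by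
        apply mul_le_mul_of_nonneg_left _ (Real.rpow_nonneg (by norm_num) p)
        rcases le_total u v with h | h
        · rw [max_eq_right h]
          have := Real.rpow_nonneg hu p; linarith
        · rw [max_eq_left h]
          have := Real.rpow_nonneg hv p; linarith

lemma one_add_rpow_le (t p : ℝ) (ht : 0 ≤ t) (hp : 0 ≤ p) :
    (1 + t) ^ p ≤ 2 ^ p * (1 + t ^ p) := by
  have := rpow_add_le_mul 1 t p zero_le_one ht hp
  simpa using this

lemma rpow_le_one_add_pow (t p : ℝ) (m : ℕ) (ht : 0 ≤ t) (hp : 0 ≤ p) (hpm : p / 2 ≤ m) :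
    t ^ (p / 2) ≤ 1 + t ^ m := by
  rcases le_total t 1 with h | h
  · have h1 : t ^ (p/2) ≤ 1 := Real.rpow_le_one ht h (by linarith)
    have h2 : (0:ℝ) ≤ t ^ m := pow_nonneg ht m
    linarith
  · have h1 : t ^ (p/2) ≤ t ^ (m:ℝ) := Real.rpow_le_rpow_of_exponent_le h hpm
    rw [Real.rpow_natCast] at h1
    linarith

lemma weighted_jensen {ι : Type*} (S : Finset ι) (a t : ι → ℝ) (m : ℕ) (hm : 1 ≤ m)
    (ha : ∀ i, 0 ≤ a i) (ht : ∀ i, 0 ≤ t i) (A : ℝ) (hA : ∑ i ∈ S, a i ≤ A) :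
    (∑ i ∈ S, a i * t i) ^ m ≤ A ^ (m - 1) * ∑ i ∈ S, a i * t i ^ m := by
  have hm' : (1:ℝ) ≤ (m:ℝ) := by exact_mod_cast hm
  have hA0 : 0 ≤ A := le_trans (Finset.sum_nonneg fun i _ => ha i) hA
  have hsum0 : 0 ≤ ∑ i ∈ S, a i := Finset.sum_nonneg fun i _ => ha i
  have hsumt0 : 0 ≤ ∑ i ∈ S, a i * t i ^ m :=
    Finset.sum_nonneg fun i _ => mul_nonneg (ha i) (pow_nonneg (ht i) m)
  have H := Real.inner_le_weight_mul_Lp_of_nonneg S hm' a t (fun i => ha i) (fun i => ht i)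
  have Hrw : ∑ i ∈ S, a i * t i ^ (m:ℝ) = ∑ i ∈ S, a i * t i ^ m := by
    refine Finset.sum_congr rfl fun i _ => ?_
    rw [Real.rpow_natCast]
  rw [Hrw] at H
  have hL0 : 0 ≤ ∑ i ∈ S, a i * t i :=
    Finset.sum_nonneg fun i _ => mul_nonneg (ha i) (ht i)
  calc (∑ i ∈ S, a i * t i) ^ m
      ≤ ((∑ i ∈ S, a i) ^ (1 - (m:ℝ)⁻¹) * (∑ i ∈ S, a i * t i ^ m) ^ ((m:ℝ)⁻¹)) ^ m :=
        pow_le_pow_left₀ hL0 H m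
    _ = (∑ i ∈ S, a i) ^ ((1 - (m:ℝ)⁻¹) * m) * (∑ i ∈ S, a i * t i ^ m) ^ ((m:ℝ)⁻¹ * m) := by
        rw [mul_pow, ← Real.rpow_natCast ((∑ i ∈ S, a i) ^ (1 - (m:ℝ)⁻¹)) m,
          ← Real.rpow_natCast ((∑ i ∈ S, a i * t i ^ m) ^ ((m:ℝ)⁻¹)) m,
          ← Real.rpow_mul hsum0, ← Real.rpow_mul hsumt0]
    _ = (∑ i ∈ S, a i) ^ ((m:ℝ) - 1) * ∑ i ∈ S, a i * t i ^ m := by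
        have hmne : (m:ℝ) ≠ 0 := by positivity
        rw [inv_mul_cancel₀ hmne, Real.rpow_one, sub_mul, one_mul, inv_mul_cancel₀ hmne]
    _ ≤ A ^ ((m:ℝ) - 1) * ∑ i ∈ S, a i * t i ^ m := by
        apply mul_le_mul_of_nonneg_right _ hsumt0
        exact Real.rpow_le_rpow hsum0 hA (by linarith)
    _ = A ^ (m - 1) * ∑ i ∈ S, a i * t i ^ m := by
        congr 1
        rw [← Real.rpow_natCast A (m-1)]
        congr 1
        have : ((m - 1 : ℕ) : ℝ) = (m:ℝ) - 1 := by
          have := Nat.cast_sub hm (R := ℝ); simpa using this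
        rw [this]

lemma wt_summable {q : ℝ} (hq : q < -1) : Summable (fun j : ℕ => wt q j) := by
  have h := (Real.summable_nat_rpow (p := q)).2 hq
  have := (summable_nat_add_iff (f := fun n : ℕ => (n:ℝ) ^ q) 1).2 h
  refine this.congr fun n => ?_
  unfold wt
  push_cast
  ring_nf

instance gaussN_prob (N : ℕ) : IsProbabilityMeasure (gaussN N) := by
  unfold gaussN; infer_instance

lemma map_eval_pi' {ι : Type*} [Fintype ι] [DecidableEq ι] {α : ι → Type*}
    [∀ i, MeasurableSpace (α i)]
    (μ : ∀ i, Measure (α i)) [∀ i, IsProbabilityMeasure (μ i)] (i : ι) :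
    (Measure.pi μ).map (fun f => f i) = μ i := by
  ext s hs
  rw [Measure.map_apply (measurable_pi_apply i) hs]
  have hpre : (fun f : ∀ j, α j => f i) ⁻¹' s =
      Set.pi Set.univ (Function.update (fun j => (Set.univ : Set (α j))) i s) := by
    ext f
    simp only [Set.mem_preimage, Set.mem_pi, Set.mem_univ, forall_true_left,
      Function.update_apply]
    constructor
    · intro h j
      by_cases hj : j = i
      · subst hj; simpa using h
      · simp [hj]
    · intro h
      have := h i
      simpa using this
  rw [hpre, Measure.pi_pi]
  rw [Finset.prod_eq_single i]
  · simp
  · intro j _ hj; simp [Function.update_apply, hj]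
  · simp

lemma integrable_pow_gaussian (k : ℕ) :
    Integrable (fun t : ℝ => t ^ k) (gaussianReal 0 1) := by
  rw [gaussianReal_of_var_ne_zero 0 one_ne_zero]
  rw [integrable_withDensity_iff (measurable_gaussianPDF 0 1)
    (ae_of_all _ fun x => ENNReal.ofReal_lt_top)]
  have : (fun x : ℝ => x ^ k * (gaussianPDF 0 1 x).toReal) =
      fun x => (Real.sqrt (2 * π))⁻¹ * (x ^ ((k:ℝ)) * Real.exp (-(2⁻¹) * x ^ 2)) := by
    funext x
    rw [gaussianPDF, ENNReal.toReal_ofReal (gaussianPDFReal_nonneg 0 1 x), gaussianPDFReal]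
    rw [Real.rpow_natCast]
    push_cast
    ring_nf
  rw [this]
  exact (integrable_rpow_mul_exp_neg_mul_sq (by norm_num)
    (lt_of_lt_of_le (by norm_num) (Nat.cast_nonneg k))).const_mul _

lemma norm_ofX (s : ℝ) (N : ℕ) (x : Fin N → ℝ) : ‖ofX s N x‖ = xnorm s N x := by
  rw [lp.norm_eq_tsum_rpow (by norm_num) (ofX s N x)]
  have h1 : ∀ j : ℕ, ‖(ofX s N x : ∀ _ : ℕ, ℝ) j‖ ^ (ENNReal.toReal 2) =
      (if h : j < N then wt (2*s) j * x ⟨j, h⟩ ^ 2 else 0) := by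
    intro j
    have hco : (ofX s N x : ∀ _ : ℕ, ℝ) j = if h : j < N then wt s j * x ⟨j, h⟩ else 0 := rfl
    rw [hco]
    by_cases h : j < N
    · rw [dif_pos h, dif_pos h]
      have h2 : (ENNReal.toReal 2) = ((2:ℕ):ℝ) := by norm_num
      rw [h2, Real.rpow_natCast, Real.norm_eq_abs, sq_abs, mul_pow, wt_sq]
    · rw [dif_neg h, dif_neg h]
      simp
  calc (∑' j, ‖(ofX s N x : ∀ _ : ℕ, ℝ) j‖ ^ (ENNReal.toReal 2)) ^ (1 / (ENNReal.toReal 2))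
      = (∑ i : Fin N, wt (2*s) i * x i ^ 2) ^ ((1:ℝ)/2) := by
        have he : (1 : ℝ) / ENNReal.toReal 2 = (1:ℝ)/2 := by norm_num
        rw [he, tsum_congr h1, tsum_eq_sum (s := Finset.range N)
            (fun j hj => dif_neg (by simpa using hj)),
            ← Fin.sum_univ_eq_sum_range
              (fun j => if h : j < N then wt (2*s) j * x ⟨j, h⟩ ^ 2 else 0) N]
        congr 1
        refine Finset.sum_congr rfl fun i _ => ?_
        rw [dif_pos i.isLt]
    _ = xnorm s N x := rfl

lemma sum_sq_le_norm_sq (g : Hsp) (N : ℕ) :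
    ∑ i : Fin N, ((g : ∀ _ : ℕ, ℝ) i) ^ 2 ≤ ‖g‖ ^ 2 := by
  have h2 : ‖g‖ ^ (ENNReal.toReal 2) = ∑' j, ‖(g : ∀ _ : ℕ, ℝ) j‖ ^ (ENNReal.toReal 2) :=
    lp.norm_rpow_eq_tsum (by norm_num) g
  have h3 : ∀ j : ℕ, ‖(g : ∀ _ : ℕ, ℝ) j‖ ^ (ENNReal.toReal 2) = ((g : ∀ _ : ℕ, ℝ) j) ^ 2 := by
    intro j
    have he : (ENNReal.toReal 2) = ((2:ℕ):ℝ) := by norm_num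
    rw [he, Real.rpow_natCast, Real.norm_eq_abs, sq_abs]
  have h4 : ‖g‖ ^ (ENNReal.toReal 2) = ‖g‖ ^ 2 := by
    have he : (ENNReal.toReal 2) = ((2:ℕ):ℝ) := by norm_num
    rw [he, Real.rpow_natCast]
  rw [h4, tsum_congr h3] at h2
  rw [h2]
  have hsum : Summable (fun j => ((g : ∀ _ : ℕ, ℝ) j) ^ 2) := by
    have := ((lp.memℓp g).summable (p := 2) (by norm_num))
    refine this.congr fun j => ?_
    rw [h3 j]
  calc ∑ i : Fin N, ((g : ∀ _ : ℕ, ℝ) i) ^ 2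
      = ∑ j ∈ Finset.range N, ((g : ∀ _ : ℕ, ℝ) j) ^ 2 :=
        Fin.sum_univ_eq_sum_range (fun j => ((g : ∀ _ : ℕ, ℝ) j) ^ 2) N
    _ ≤ ∑' j, ((g : ∀ _ : ℕ, ℝ) j) ^ 2 :=
        Summable.sum_le_tsum _ (fun j _ => sq_nonneg _) hsum

set_option maxHeartbeats 2000000 in
theorem statement_6 (lam : ℕ → ℝ) (κ cminus cplus s : ℝ) (Ψ : Hsp → ℝ) (gradΨ : Hsp → Hsp)
    (M₁ M₂ M₃ M₄ : ℝ)
    (hκ : 1/2 < κ) (hcminus : 0 < cminus) (hcpm : cminus ≤ cplus)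
    (hlampos : ∀ j : ℕ, 0 < lam j)
    (hlam : ∀ j : ℕ, cminus * wt (-κ) j ≤ lam j ∧ lam j ≤ cplus * wt (-κ) j)
    (hs0 : 0 ≤ s) (hsκ : s < κ - 1/2)
    (hΨdiff : Differentiable ℝ Ψ) (hΨdiff2 : Differentiable ℝ (fderiv ℝ Ψ))
    (hgradrep : ∀ x h : Hsp, fderiv ℝ Ψ x h = ∑' j, seqr (-s) (gradΨ x) j * seqr s h j)
    (hΨlb : ∀ x : Hsp, M₁ ≤ Ψ x) (hΨub : ∀ x : Hsp, Ψ x ≤ M₂ * (1 + ‖x‖ ^ 2))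
    (hgradb : ∀ x : Hsp, ‖gradΨ x‖ ≤ M₃ * (1 + ‖x‖))
    (hhessb : ∀ x : Hsp, ‖fderiv ℝ (fderiv ℝ Ψ) x‖ ≤ M₄) (ℓ : ℝ) (hℓ : 0 < ℓ):
    ∀ p : ℝ, 1 ≤ p → ∃ K : ℝ, ∀ N : ℕ, 1 ≤ N → ∀ x : Fin N → ℝ,
      (∫ ξ, xnorm s N (fun i => propY lam s gradΨ ℓ N x ξ i - x i) ^ p ∂(gaussN N))
        ≤ K * Δt N ^ (p / 2) * (1 + xnorm s N x ^ p) := by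
  intro p hp
  have hp0 : 0 ≤ p := by linarith
  have hcplus : 0 < cplus := lt_of_lt_of_le hcminus hcpm
  have hM3 : 0 ≤ M₃ := by
    have h := hgradb 0
    simp only [norm_zero, add_zero, mul_one] at h
    exact le_trans (norm_nonneg _) h
  set C₂ : ℝ := 1 + cplus^2 * M₃ with hC₂def
  have hC₂1 : 1 ≤ C₂ := by nlinarith
  have hC₂0 : 0 ≤ C₂ := by linarith
  set q : ℝ := 2*s - 2*κ with hqdef
  have hq : q < -1 := by rw [hqdef]; linarith
  have hq0 : q ≤ 0 := by linarith
  have hTs : Summable (fun j : ℕ => wt q j) := wt_summable hq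
  set T : ℝ := ∑' j : ℕ, wt q j with hTdef
  have hT0 : 0 ≤ T := tsum_nonneg fun j => wt_nonneg q j
  set S : ℝ := cplus^2 * T with hSdef
  have hS0 : 0 ≤ S := by positivity
  set m : ℕ := ⌈p/2⌉₊ with hmdef
  have hm1 : 1 ≤ m := Nat.one_le_ceil_iff.mpr (by linarith)
  have hpm : p/2 ≤ (m:ℝ) := Nat.le_ceil _
  set c : ℝ := ∫ t, t ^ (2*m) ∂(gaussianReal 0 1) with hcdef
  have hc0 : 0 ≤ c := by
    apply integral_nonneg
    intro t
    show (0:ℝ) ≤ t ^ (2*m)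
    rw [pow_mul]
    positivity
  refine ⟨4^p * (ℓ*C₂)^p + 2^p * (2*ℓ)^(p/2) * (1 + S^m * c), ?_⟩
  intro N hN x
  have hΔpos : 0 < Δt N := by
    apply Real.rpow_pos_of_pos
    exact_mod_cast Nat.lt_of_lt_of_le Nat.zero_lt_one hN
  have hΔ1 : Δt N ≤ 1 :=
    Real.rpow_le_one_of_one_le_of_nonpos (by exact_mod_cast hN) (by norm_num)
  set δ : ℝ := ℓ * Δt N with hδdef
  have hδ0 : 0 < δ := mul_pos hℓ hΔpos
  set g : Hsp := gradΨ (ofX s N x) with hgdef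
  set G : ℕ → ℝ := fun j => (g : ∀ _ : ℕ, ℝ) j with hGdef
  set X₀ : ℝ := xnorm s N x with hX₀def
  have hX₀0 : 0 ≤ X₀ := xnorm_nonneg s N x
  -- bound on the drift
  have key : ∀ i : Fin N, lam i ^ 2 * wt s i ≤ cplus^2 * wt (-s) i := by
    intro i
    have h1 : lam i ^ 2 ≤ cplus^2 * wt (2*(-κ)) i := by
      have h2 := (hlam i).2
      have h3 : lam i ^ 2 ≤ (cplus * wt (-κ) i)^2 :=
        pow_le_pow_left₀ (hlampos i).le h2 2
      rw [mul_pow, wt_sq] at h3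
      exact h3
    calc lam i ^2 * wt s i ≤ (cplus^2 * wt (2*(-κ)) i) * wt s i :=
          mul_le_mul_of_nonneg_right h1 (wt_nonneg _ _)
      _ = cplus^2 * (wt (2*(-κ)) i * wt s i) := by ring
      _ = cplus^2 * wt (2*(-κ) + s) i := by rw [wt_mul]
      _ = cplus^2 * (wt (-s) i * wt q i) := by rw [wt_mul]; congr 1; rw [hqdef]; ring
      _ ≤ cplus^2 * (wt (-s) i * 1) := by
          apply mul_le_mul_of_nonneg_left _ (by positivity)
          exact mul_le_mul_of_nonneg_left (wt_le_one hq0 i) (wt_nonneg _ _)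
      _ = cplus^2 * wt (-s) i := by rw [mul_one]
  have hgnorm : ‖g‖ ≤ M₃ * (1 + X₀) := by
    rw [hgdef]
    have := hgradb (ofX s N x)
    rwa [norm_ofX, ← hX₀def] at this
  have hmu : xnorm s N (muN lam s gradΨ N x) ≤ C₂ * (1 + X₀) := by
    have hmu_eq : muN lam s gradΨ N x =
        fun i : Fin N => (-1) * (x i + lam i ^ 2 * (wt s i * G (i:ℕ))) := by
      funext i
      simp only [muN, seqr, neg_neg, hGdef, hgdef]
      ring
    rw [hmu_eq, xnorm_smul]
    simp only [abs_neg, abs_one, one_mul]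
    calc xnorm s N (fun i : Fin N => x i + lam i ^ 2 * (wt s i * G (i:ℕ)))
        ≤ xnorm s N x + xnorm s N (fun i : Fin N => lam i ^ 2 * (wt s i * G (i:ℕ))) :=
          xnorm_triangle s N x _
      _ ≤ X₀ + cplus^2 * (M₃ * (1 + X₀)) := by
          apply add_le_add (le_of_eq hX₀def.symm)
          have hb1 : xnorm s N (fun i : Fin N => lam i ^ 2 * (wt s i * G (i:ℕ)))
              ≤ xnorm s N (fun i : Fin N => cplus^2 * (wt (-s) i * G (i:ℕ))) := by
            apply xnorm_mono
            intro i
            rw [abs_mul, abs_mul, abs_mul, abs_mul]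
            rw [abs_of_nonneg (sq_nonneg (lam i)), abs_of_nonneg (wt_nonneg s (i:ℕ)),
              abs_of_nonneg (sq_nonneg cplus), abs_of_nonneg (wt_nonneg (-s) (i:ℕ))]
            rw [← mul_assoc, ← mul_assoc]
            exact mul_le_mul_of_nonneg_right (key i) (abs_nonneg _)
          have hb2 : xnorm s N (fun i : Fin N => cplus^2 * (wt (-s) i * G (i:ℕ)))
              = cplus^2 * xnorm s N (fun i : Fin N => wt (-s) i * G (i:ℕ)) := by
            rw [xnorm_smul, abs_of_nonneg (sq_nonneg cplus)]
          have hb3 : xnorm s N (fun i : Fin N => wt (-s) i * G (i:ℕ)) ≤ ‖g‖ := by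
            rw [xnorm_eq_sqrt]
            have hsum_eq : ∑ i : Fin N, wt (2*s) i * (wt (-s) i * G (i:ℕ)) ^ 2
                = ∑ i : Fin N, (G (i:ℕ))^2 := by
              refine Finset.sum_congr rfl fun i _ => ?_
              rw [mul_pow, wt_sq, ← mul_assoc, wt_mul]
              have : 2*s + 2*(-s) = 0 := by ring
              rw [this]
              unfold wt
              rw [Real.rpow_zero, one_mul]
            rw [hsum_eq]
            calc Real.sqrt (∑ i : Fin N, (G (i:ℕ))^2)
                ≤ Real.sqrt (‖g‖^2) := Real.sqrt_le_sqrt (sum_sq_le_norm_sq g N)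
              _ = ‖g‖ := Real.sqrt_sq (norm_nonneg g)
          calc xnorm s N (fun i : Fin N => lam i ^ 2 * (wt s i * G (i:ℕ)))
              ≤ cplus^2 * xnorm s N (fun i : Fin N => wt (-s) i * G (i:ℕ)) :=
                hb2 ▸ hb1
            _ ≤ cplus^2 * ‖g‖ := mul_le_mul_of_nonneg_left hb3 (by positivity)
            _ ≤ cplus^2 * (M₃ * (1 + X₀)) :=
                mul_le_mul_of_nonneg_left hgnorm (by positivity)
      _ ≤ C₂ * (1 + X₀) := by rw [hC₂def]; nlinarith
  set R : ℝ := C₂ * (1 + X₀) with hRdef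
  have hR0 : 0 ≤ R := mul_nonneg hC₂0 (by linarith)
  -- the coefficients a i
  set a : Fin N → ℝ := fun i => wt (2*s) i * lam i ^ 2 with hadef
  have ha0 : ∀ i, 0 ≤ a i := fun i => mul_nonneg (wt_nonneg _ _) (sq_nonneg _)
  have haS : ∑ i : Fin N, a i ≤ S := by
    have hai : ∀ i : Fin N, a i ≤ cplus^2 * wt q i := by
      intro i
      have h1 : lam i ^ 2 ≤ cplus^2 * wt (2*(-κ)) i := by
        have h2 := (hlam i).2
        have h3 : lam i ^ 2 ≤ (cplus * wt (-κ) i)^2 :=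
          pow_le_pow_left₀ (hlampos i).le h2 2
        rw [mul_pow, wt_sq] at h3
        exact h3
      calc a i = wt (2*s) i * lam i ^2 := rfl
        _ ≤ wt (2*s) i * (cplus^2 * wt (2*(-κ)) i) :=
            mul_le_mul_of_nonneg_left h1 (wt_nonneg _ _)
        _ = cplus^2 * (wt (2*s) i * wt (2*(-κ)) i) := by ring
        _ = cplus^2 * wt q i := by rw [wt_mul]; congr 1; rw [hqdef]; ring
    calc ∑ i : Fin N, a i ≤ ∑ i : Fin N, cplus^2 * wt q i := Finset.sum_le_sum fun i _ => hai i
      _ = cplus^2 * ∑ i : Fin N, wt q (i:ℕ) := by rw [Finset.mul_sum]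
      _ ≤ cplus^2 * T := by
          apply mul_le_mul_of_nonneg_left _ (by positivity)
          rw [Fin.sum_univ_eq_sum_range (fun j => wt q j) N, hTdef]
          exact Summable.sum_le_tsum _ (fun j _ => wt_nonneg q j) hTs
      _ = S := hSdef.symm
  -- pointwise decomposition of the proposal increment
  have hYdecomp : ∀ ξ : Fin N → ℝ, (fun i => propY lam s gradΨ ℓ N x ξ i - x i) =
      (fun i : Fin N => δ * muN lam s gradΨ N x i + Real.sqrt (2*δ) * (lam i * ξ i)) := by
    intro ξ; funext i
    simp only [propY, hδdef]
    ring
  set C₅ : ℝ := (2:ℝ)^p with hC₅def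
  have hC₅0 : 0 ≤ C₅ := Real.rpow_nonneg (by norm_num) p
  set C₆ : ℝ := (2*δ)^(p/2) with hC₆def
  have hC₆0 : 0 ≤ C₆ := Real.rpow_nonneg (by linarith) _
  set C₃ : ℝ := C₅*(δ*R)^p + C₅*C₆ with hC₃def
  set C₄ : ℝ := C₅*C₆*S^(m-1) with hC₄def
  have hC₄0 : 0 ≤ C₄ := by positivity
  -- pointwise bound
  have hpt : ∀ ξ : Fin N → ℝ,
      xnorm s N (fun i => propY lam s gradΨ ℓ N x ξ i - x i) ^ p ≤
        C₃ + C₄ * (∑ i : Fin N, a i * ξ i ^ (2*m)) := by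
    intro ξ
    set X : ℝ := ∑ i : Fin N, a i * ξ i ^ 2 with hXdef
    have hX0 : 0 ≤ X := Finset.sum_nonneg fun i _ => mul_nonneg (ha0 i) (sq_nonneg _)
    have hstep1 : xnorm s N (fun i => propY lam s gradΨ ℓ N x ξ i - x i) ≤
        δ * R + Real.sqrt (2*δ) * Real.sqrt X := by
      rw [hYdecomp ξ]
      calc xnorm s N (fun i : Fin N => δ * muN lam s gradΨ N x i
              + Real.sqrt (2*δ) * (lam i * ξ i))
          ≤ xnorm s N (fun i : Fin N => δ * muN lam s gradΨ N x i)
            + xnorm s N (fun i : Fin N => Real.sqrt (2*δ) * (lam i * ξ i)) :=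
            xnorm_triangle s N _ _
        _ = δ * xnorm s N (muN lam s gradΨ N x)
            + Real.sqrt (2*δ) * xnorm s N (fun i : Fin N => lam i * ξ i) := by
            rw [xnorm_smul, xnorm_smul, abs_of_nonneg hδ0.le,
              abs_of_nonneg (Real.sqrt_nonneg _)]
        _ ≤ δ * R + Real.sqrt (2*δ) * Real.sqrt X := by
            apply add_le_add (mul_le_mul_of_nonneg_left hmu hδ0.le)
            apply mul_le_mul_of_nonneg_left _ (Real.sqrt_nonneg _)
            apply le_of_eq
            rw [xnorm_eq_sqrt]
            congr 1
            refine Finset.sum_congr rfl fun i _ => ?_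
            rw [hadef]
            ring
    have h1 : xnorm s N (fun i => propY lam s gradΨ ℓ N x ξ i - x i) ^ p ≤
        (δ * R + Real.sqrt (2*δ) * Real.sqrt X) ^ p :=
      Real.rpow_le_rpow (xnorm_nonneg _ _ _) hstep1 hp0
    have h2 : (δ * R + Real.sqrt (2*δ) * Real.sqrt X) ^ p ≤
        2^p * ((δ*R)^p + (Real.sqrt (2*δ) * Real.sqrt X)^p) :=
      rpow_add_le_mul _ _ p (mul_nonneg hδ0.le hR0)
        (mul_nonneg (Real.sqrt_nonneg _) (Real.sqrt_nonneg _)) hp0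
    have h3 : (Real.sqrt (2*δ) * Real.sqrt X)^p = C₆ * X^(p/2) := by
      rw [Real.mul_rpow (Real.sqrt_nonneg _) (Real.sqrt_nonneg _),
        Real.sqrt_eq_rpow, Real.sqrt_eq_rpow,
        ← Real.rpow_mul (by linarith : (0:ℝ) ≤ 2*δ), ← Real.rpow_mul hX0,
        show (1:ℝ)/2 * p = p/2 by ring, hC₆def]
    have h4 : X^(p/2) ≤ 1 + X^m := rpow_le_one_add_pow X p m hX0 hp0 hpm
    have h5 : X^m ≤ S^(m-1) * ∑ i : Fin N, a i * ξ i ^ (2*m) := by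
      have hj := weighted_jensen Finset.univ a (fun i => ξ i ^ 2) m hm1 ha0
        (fun i => sq_nonneg _) S haS
      calc X^m ≤ S ^ (m-1) * ∑ i : Fin N, a i * (ξ i ^ 2) ^ m := hj
        _ = S^(m-1) * ∑ i : Fin N, a i * ξ i ^ (2*m) := by
            congr 1
            refine Finset.sum_congr rfl fun i _ => ?_
            rw [← pow_mul]
    have hGm0 : 0 ≤ ∑ i : Fin N, a i * ξ i ^ (2*m) := by
      apply Finset.sum_nonneg
      intro i _
      apply mul_nonneg (ha0 i)
      rw [pow_mul]
      positivity
    have hX12 : X^(p/2) ≤ 1 + S^(m-1) * ∑ i : Fin N, a i * ξ i ^ (2*m) := by linarith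
    calc xnorm s N (fun i => propY lam s gradΨ ℓ N x ξ i - x i) ^ p
        ≤ 2^p * ((δ*R)^p + C₆ * X^(p/2)) := by rw [← h3]; exact le_trans h1 h2
      _ ≤ 2^p * ((δ*R)^p + C₆ * (1 + S^(m-1) * ∑ i : Fin N, a i * ξ i ^ (2*m))) := by
          apply mul_le_mul_of_nonneg_left _ (Real.rpow_nonneg (by norm_num) p)
          apply add_le_add le_rfl
          exact mul_le_mul_of_nonneg_left hX12 hC₆0
      _ = C₃ + C₄ * (∑ i : Fin N, a i * ξ i ^ (2*m)) := by
          rw [hC₃def, hC₄def, hC₅def]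
          ring
  -- integrability
  have hmap : ∀ i : Fin N, (gaussN N).map (fun ξ => ξ i) = gaussianReal 0 1 := by
    intro i
    exact map_eval_pi' (fun _ : Fin N => gaussianReal 0 1) i
  have hint_i : ∀ i : Fin N,
      Integrable (fun ξ : Fin N → ℝ => ξ i ^ (2*m)) (gaussN N) := by
    intro i
    have := (integrable_map_measure (f := fun ξ : Fin N → ℝ => ξ i)
      (g := fun t : ℝ => t ^ (2*m))
      ((continuous_pow (2*m)).measurable.aestronglyMeasurable)
      (measurable_pi_apply i).aemeasurable).mp
      (by rw [hmap i]; exact integrable_pow_gaussian (2*m))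
    exact this
  have hval_i : ∀ i : Fin N, ∫ ξ, ξ i ^ (2*m) ∂(gaussN N) = c := by
    intro i
    have hIM := integral_map (μ := gaussN N) (φ := fun ξ : Fin N → ℝ => ξ i)
      (f := fun t : ℝ => t ^ (2*m)) (measurable_pi_apply i).aemeasurable
      ((continuous_pow (2*m)).measurable.aestronglyMeasurable)
    rw [hmap i] at hIM
    rw [hcdef, ← hIM]
  have hGint : Integrable (fun ξ : Fin N → ℝ => ∑ i : Fin N, a i * ξ i ^ (2*m)) (gaussN N) :=
    integrable_finset_sum _ (fun i _ => (hint_i i).const_mul (a i))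
  have hΦint : Integrable (fun ξ : Fin N → ℝ =>
      C₃ + C₄ * (∑ i : Fin N, a i * ξ i ^ (2*m))) (gaussN N) :=
    (integrable_const C₃).add (hGint.const_mul C₄)
  have hΦval : ∫ ξ, (C₃ + C₄ * (∑ i : Fin N, a i * ξ i ^ (2*m))) ∂(gaussN N)
      = C₃ + C₄ * ∑ i : Fin N, a i * c := by
    rw [integral_add (integrable_const C₃) (hGint.const_mul C₄), integral_const]
    simp only [measure_univ, probReal_univ, ENNReal.toReal_one, smul_eq_mul, one_mul]
    congr 1
    rw [integral_const_mul, integral_finset_sum _ (fun i _ => (hint_i i).const_mul (a i))]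
    congr 1
    refine Finset.sum_congr rfl fun i _ => ?_
    rw [integral_const_mul, hval_i i]
  -- main integral bound
  have hmain : (∫ ξ, xnorm s N (fun i => propY lam s gradΨ ℓ N x ξ i - x i) ^ p ∂(gaussN N))
      ≤ C₃ + C₄ * ∑ i : Fin N, a i * c := by
    rw [← hΦval]
    apply integral_mono_of_nonneg
    · exact ae_of_all _ fun ξ => Real.rpow_nonneg (xnorm_nonneg _ _ _) p
    · exact hΦint
    · exact ae_of_all _ hpt
  -- final arithmetic
  have hac : C₄ * ∑ i : Fin N, a i * c ≤ C₅ * C₆ * (S^m * c) := by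
    have h1 : ∑ i : Fin N, a i * c ≤ S * c := by
      calc ∑ i : Fin N, a i * c = (∑ i : Fin N, a i) * c := by rw [Finset.sum_mul]
        _ ≤ S * c := mul_le_mul_of_nonneg_right haS hc0
    calc C₄ * ∑ i : Fin N, a i * c ≤ C₄ * (S * c) := by
          apply mul_le_mul_of_nonneg_left h1 hC₄0
      _ = C₅ * C₆ * (S^(m-1) * S * c) := by rw [hC₄def]; ring
      _ = C₅ * C₆ * (S^m * c) := by
          rw [pow_sub_one_mul (by omega : m ≠ 0) S]
  have hΔp : Δt N ^ p ≤ Δt N ^ (p/2) :=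
    Real.rpow_le_rpow_of_exponent_ge hΔpos hΔ1 (by linarith)
  have hA : (δ*R)^p ≤ (ℓ*C₂)^p * (2^p * (Δt N ^(p/2) * (1 + X₀^p))) := by
    have he : δ * R = (ℓ*C₂) * (Δt N * (1 + X₀)) := by
      rw [hδdef, hRdef]; ring
    rw [he, Real.mul_rpow (by positivity) (mul_nonneg hΔpos.le (by linarith)),
      Real.mul_rpow hΔpos.le (by linarith : (0:ℝ) ≤ 1 + X₀)]
    apply mul_le_mul_of_nonneg_left _ (Real.rpow_nonneg (by positivity) p)
    calc Δt N ^ p * (1 + X₀)^p ≤ Δt N ^ (p/2) * (2^p * (1 + X₀^p)) := by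
          apply mul_le_mul hΔp (one_add_rpow_le X₀ p hX₀0 hp0)
            (Real.rpow_nonneg (by linarith : (0:ℝ) ≤ 1 + X₀) p) (Real.rpow_nonneg hΔpos.le _)
      _ = 2^p * (Δt N ^(p/2) * (1 + X₀^p)) := by ring
  have hC₆eq : C₆ = (2*ℓ)^(p/2) * Δt N ^ (p/2) := by
    rw [hC₆def, hδdef, show 2*(ℓ*Δt N) = (2*ℓ)*Δt N by ring,
      Real.mul_rpow (by positivity) hΔpos.le]
  have hfour : C₅ * (ℓ*C₂)^p * 2^p = 4^p * (ℓ*C₂)^p := by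
    have h44 : (4:ℝ)^p = 2^p * 2^p := by
      rw [← Real.mul_rpow (by norm_num : (0:ℝ) ≤ 2) (by norm_num : (0:ℝ) ≤ 2)]
      norm_num
    rw [hC₅def, h44]
    ring
  have hone_le : (1:ℝ) ≤ 1 + X₀^p := by
    have := Real.rpow_nonneg hX₀0 p; linarith
  calc (∫ ξ, xnorm s N (fun i => propY lam s gradΨ ℓ N x ξ i - x i) ^ p ∂(gaussN N))
      ≤ C₃ + C₄ * ∑ i : Fin N, a i * c := hmain
    _ ≤ C₅*(δ*R)^p + C₅*C₆ + C₅ * C₆ * (S^m * c) := by rw [hC₃def]; linarith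
    _ = C₅*(δ*R)^p + C₅*C₆*(1 + S^m * c) := by ring
    _ ≤ C₅*((ℓ*C₂)^p * (2^p * (Δt N ^(p/2) * (1 + X₀^p))))
        + C₅*C₆*(1 + S^m * c) := by
        have := mul_le_mul_of_nonneg_left hA hC₅0
        linarith
    _ = 4^p * (ℓ*C₂)^p * (Δt N ^(p/2) * (1 + X₀^p))
        + (C₅*(2*ℓ)^(p/2)*(1 + S^m * c)) * Δt N ^ (p/2) := by
        rw [hC₆eq, ← hfour]; ring
    _ ≤ 4^p * (ℓ*C₂)^p * (Δt N ^(p/2) * (1 + X₀^p))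
        + (C₅*(2*ℓ)^(p/2)*(1 + S^m * c)) * Δt N ^ (p/2) * (1 + X₀^p) := by
        have hSc : 0 ≤ S^m * c := mul_nonneg (pow_nonneg hS0 m) hc0
        have hnn : 0 ≤ (C₅*(2*ℓ)^(p/2)*(1 + S^m * c)) * Δt N ^ (p/2) := by
          apply mul_nonneg _ (Real.rpow_nonneg hΔpos.le _)
          apply mul_nonneg (mul_nonneg hC₅0 (Real.rpow_nonneg (by positivity) _))
          linarith
        have hbb := le_mul_of_one_le_right hnn hone_le
        linarith
    _ = (4^p * (ℓ*C₂)^p + 2^p * (2*ℓ)^(p/2) * (1 + S^m * c)) * Δt N ^ (p/2) * (1 + X₀^p) := by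
        rw [hC₅def]; ring


end
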